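/- arXiv:2206.03674 — 4 statements merged into one kernel-verified Lean document; each statement's English description precedes it below -/
import Mathlib

section
/- Let ℤ² denote ℤ × ℤ with componentwise addition, let H be a group acting on ℤ² by additive bijections (the action of each h ∈ H satisfies h • (x + y) = h • x + h • y) and acting on a set A. Let K : A → ℤ² → ℝ be a kernel satisfying the covariance law K a d = K (h • a) (h • d) for all h, a, d, and define the cross-correlation (K^a ⋆ V)(s) = ∑'_{d ∈ ℤ²} K a d * V (s + d). Then the cross-correlation is equivariant under the combined action of translations t ∈ ℤ² and H: for all h ∈ H, t ∈ ℤ², a ∈ A, V : ℤ² → ℝ and s ∈ ℤ², ∑'_{d} K (h • a) d * V (h⁻¹ • (s + d - t)) = (K^a ⋆ V)(h⁻¹ • (s - t)). -/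
/-- Cross-correlation with a kernel satisfying the covariance law
`K a d = K (h • a) (h • d)` is equivariant under the combined action of
translations `t ∈ ℤ²` and `H`. -/
theorem cross_correlation_equivariant
    {H A : Type*} [Group H] [MulAction H (ℤ × ℤ)] [MulAction H A]
    (hadd : ∀ (h : H) (x y : ℤ × ℤ), h • (x + y) = h • x + h • y)
    (K : A → ℤ × ℤ → ℝ)
    (hK : ∀ (h : H) (a : A) (d : ℤ × ℤ), K a d = K (h • a) (h • d))
    (h : H) (t : ℤ × ℤ) (a : A) (V : ℤ × ℤ → ℝ) (s : ℤ × ℤ) :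
    ∑' d : ℤ × ℤ, K (h • a) d * V (h⁻¹ • (s + d - t))
      = ∑' d : ℤ × ℤ, K a d * V (h⁻¹ • (s - t) + d) := by
  rw [← (MulAction.toPerm h).tsum_eq
      (f := fun d => K (h • a) d * V (h⁻¹ • (s + d - t)))]
  refine tsum_congr fun d => ?_
  have h1 : K (h • a) (MulAction.toPerm h d) = K a d := (hK h a d).symm
  have h2 : h⁻¹ • (s + h • d - t) = h⁻¹ • (s - t) + d := by
    have : s + h • d - t = (s - t) + h • d := by ring
    rw [this, hadd, inv_smul_smul]
  simp only [MulAction.toPerm_apply, h2, ← hK h a d]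
end

section
/- Let ℤ² denote ℤ × ℤ with componentwise addition, let H be a group acting on ℤ² by additive maps (h • (x + y) = h • x + h • y), and let ρ_in : H →* GL(n, ℝ) and ρ_out : H →* GL(m, ℝ) be group homomorphisms into the groups of invertible n × n and m × m real matrices. Let ψ : ℤ² → Matrix (Fin m) (Fin n) ℝ have finite support and satisfy the H-steerability constraint ψ (h • x) = ρ_out(h) * ψ(x) * (ρ_in(h))⁻¹ for all h ∈ H and x ∈ ℤ². Define the steerable convolution of ψ with a feature field f : ℤ² → (Fin n → ℝ) by (ψ ⋆ f)(s) = ∑'_{s' ∈ ℤ²} (ψ (s - s')).mulVec (f s'). Then for all h ∈ H, t ∈ ℤ², f : ℤ² → (Fin n → ℝ) and s ∈ ℤ²: (ψ ⋆ (fun x => (ρ_in(h)).mulVec (f (h⁻¹ • (x - t)))))(s) = (ρ_out(h)).mulVec ((ψ ⋆ f)(h⁻¹ • (s - t))). That is, steerable convolution with an H-steerable kernel is equivariant under the induced representations of the semidirect product of ℤ²-translations and H. -/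
/-- Steerable convolution with an `H`-steerable matrix-valued
kernel `ψ : ℤ² → Matrix (Fin m) (Fin n) ℝ` (of finite support) is equivariant
under the representations of the semidirect product of `ℤ²`-translations and `H`
induced by the fiber representations `ρ_in`, `ρ_out`. -/
theorem steerable_convolution_equivariant
    {H : Type*} [Group H] [MulAction H (ℤ × ℤ)]
    (hadd : ∀ (h : H) (x y : ℤ × ℤ), h • (x + y) = h • x + h • y)
    {n m : ℕ}
    (ρin : H →* GL (Fin n) ℝ) (ρout : H →* GL (Fin m) ℝ)
    (ψ : ℤ × ℤ → Matrix (Fin m) (Fin n) ℝ)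
    (hfin : (Function.support ψ).Finite)
    (hsteer : ∀ (h : H) (x : ℤ × ℤ),
      ψ (h • x) = (ρout h : Matrix (Fin m) (Fin m) ℝ) * ψ x
          * (((ρin h)⁻¹ : GL (Fin n) ℝ) : Matrix (Fin n) (Fin n) ℝ))
    (h : H) (t : ℤ × ℤ) (f : ℤ × ℤ → Fin n → ℝ) (s : ℤ × ℤ) :
    ∑' s' : ℤ × ℤ,
        (ψ (s - s')).mulVec
          (((ρin h : Matrix (Fin n) (Fin n) ℝ)).mulVec (f (h⁻¹ • (s' - t))))
      = ((ρout h : Matrix (Fin m) (Fin m) ℝ)).mulVec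
          (∑' s' : ℤ × ℤ, (ψ (h⁻¹ • (s - t) - s')).mulVec (f s')) := by
  have hsub : ∀ (g : H) (x y : ℤ × ℤ), g • (x - y) = g • x - g • y := by
    intro g x y
    have h1 := hadd g (x - y) y
    rw [sub_add_cancel] at h1
    exact eq_sub_of_add_eq h1.symm
  set u : ℤ × ℤ := h⁻¹ • (s - t) with hu
  set A : Matrix (Fin m) (Fin m) ℝ := (ρout h : Matrix (Fin m) (Fin m) ℝ)
  set C : Matrix (Fin n) (Fin n) ℝ := (ρin h : Matrix (Fin n) (Fin n) ℝ)
  -- change of variables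
  let e : (ℤ × ℤ) ≃ (ℤ × ℤ) := (MulAction.toPerm h).trans (Equiv.addRight t)
  have he : ∀ s' : ℤ × ℤ, e s' = h • s' + t := fun _ => rfl
  have hstep : ∀ s' : ℤ × ℤ,
      (ψ (s - e s')).mulVec (C.mulVec (f (h⁻¹ • (e s' - t))))
        = A.mulVec ((ψ (u - s')).mulVec (f s')) := by
    intro s'
    have h1 : s - e s' = h • (u - s') := by
      rw [he, hsub, hu, smul_inv_smul]
      abel
    have h2 : h⁻¹ • (e s' - t) = s' := by
      rw [he, add_sub_cancel_right, inv_smul_smul]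
    rw [h1, h2, hsteer]
    rw [Matrix.mulVec_mulVec, Matrix.mul_assoc]
    have : (((ρin h)⁻¹ : GL (Fin n) ℝ) : Matrix (Fin n) (Fin n) ℝ) * C = 1 :=
      Units.inv_mul _
    rw [this, Matrix.mul_one, ← Matrix.mulVec_mulVec]
  calc ∑' s' : ℤ × ℤ,
        (ψ (s - s')).mulVec (C.mulVec (f (h⁻¹ • (s' - t))))
      = ∑' s' : ℤ × ℤ,
        (ψ (s - e s')).mulVec (C.mulVec (f (h⁻¹ • (e s' - t)))) :=
        (e.tsum_eq fun s' => (ψ (s - s')).mulVec (C.mulVec (f (h⁻¹ • (s' - t))))).symm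
    _ = ∑' s' : ℤ × ℤ, A.mulVec ((ψ (u - s')).mulVec (f s')) := by
        exact tsum_congr hstep
    _ = A.mulVec (∑' s' : ℤ × ℤ, (ψ (u - s')).mulVec (f s')) := by
        -- both tsums are finite sums over the support finset
        set F : Finset (ℤ × ℤ) := hfin.toFinset.image (fun x => u - x) with hF
        have hz : ∀ s' : ℤ × ℤ, s' ∉ F → (ψ (u - s')).mulVec (f s') = 0 := by
          intro s' hs'
          have : ψ (u - s') = 0 := by
            by_contra hne
            exact hs' (Finset.mem_image.mpr ⟨u - s', hfin.mem_toFinset.mpr hne,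
              by abel⟩)
          simp [this, Matrix.zero_mulVec]
        have hz' : ∀ s' : ℤ × ℤ, s' ∉ F →
            A.mulVec ((ψ (u - s')).mulVec (f s')) = 0 := by
          intro s' hs'
          rw [hz s' hs', Matrix.mulVec_zero]
        rw [tsum_eq_sum hz', tsum_eq_sum hz]
        exact (map_sum (Matrix.mulVecLin A) _ F).symm
end

section
/- Let G be a group acting on a set S, on a set A, and let X be a type so that maps are functions M : S → X with G acting by [g.M](s) = M(g⁻¹ • s). Suppose the transition kernel P : A → S → S → ℝ is G-invariant (P (g • a) (g • s) (g • s') = P a s s'), the map-conditioned reward R : (S → X) → A → S → ℝ satisfies R (g.M) (g • a) (g • s) = R M a s for all g, M, a, s, and γ ∈ ℝ. Define the Q-value update Q_{M,V}(a, s) = R M a s + γ * ∑'_{s'} P a s s' * V s'. Then the update is equivariant: for all g ∈ G, M : S → X, V : S → ℝ, a ∈ A, s ∈ S, Q_{g.M, g.V}(g • a, s) = Q_{M,V}(a, g⁻¹ • s), where [g.V](s') = V(g⁻¹ • s'). -/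
/-- If the transition kernel is `G`-invariant and the
map-conditioned reward satisfies `R (g.M) (g • a) (g • s) = R M a s`, then the
Q-value update `Q_{M,V}(a, s) = R M a s + γ * ∑' s', P a s s' * V s'` is
equivariant: `Q_{g.M, g.V}(g • a, s) = Q_{M,V}(a, g⁻¹ • s)`. -/
theorem q_value_update_equivariant
    {G S A X : Type*} [Group G] [MulAction G S] [MulAction G A]
    (P : A → S → S → ℝ)
    (hP : ∀ (g : G) (a : A) (s s' : S), P (g • a) (g • s) (g • s') = P a s s')
    (R : (S → X) → A → S → ℝ)
    (hR : ∀ (g : G) (M : S → X) (a : A) (s : S),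
      R (fun s => M (g⁻¹ • s)) (g • a) (g • s) = R M a s)
    (γ : ℝ)
    (g : G) (M : S → X) (V : S → ℝ) (a : A) (s : S) :
    R (fun s => M (g⁻¹ • s)) (g • a) s
        + γ * ∑' s' : S, P (g • a) s s' * V (g⁻¹ • s')
      = R M a (g⁻¹ • s) + γ * ∑' s' : S, P a (g⁻¹ • s) s' * V s' := by
  have h1 : R (fun s => M (g⁻¹ • s)) (g • a) s = R M a (g⁻¹ • s) := by
    conv_lhs => rw [show s = g • (g⁻¹ • s) by simp]
    exact hR g M a (g⁻¹ • s)
  have h2 : ∑' s' : S, P (g • a) s s' * V (g⁻¹ • s')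
      = ∑' s' : S, P a (g⁻¹ • s) s' * V s' := by
    rw [← (MulAction.toPermHom G S g⁻¹).tsum_eq (fun s' => P a (g⁻¹ • s) s' * V s')]
    refine tsum_congr fun s' => ?_
    show _ = P a (g⁻¹ • s) (g⁻¹ • s') * V (g⁻¹ • s')
    conv_lhs => rw [show s = g • (g⁻¹ • s) by simp, show s' = g • (g⁻¹ • s') by simp, hP, smul_inv_smul]
  rw [h1, h2]
end

section
/- Let G be a group acting on a set S, on a finite nonempty type A of actions, and let X be a type so that maps are functions M : S → X with G acting by [g.M](s) = M(g⁻¹ • s). Suppose the transition kernel P : A → S → S → ℝ is G-invariant (P (g • a) (g • s) (g • s') = P a s s'), the map-conditioned reward R : (S → X) → A → S → ℝ satisfies R (g.M) (g • a) (g • s) = R M a s, and γ ∈ ℝ. Define the Bellman optimality operator T_M[V](s) = ⨆_{a ∈ A} (R M a s + γ * ∑'_{s'} P a s s' * V s'). Then the Bellman operator is equivariant: for all g ∈ G, M : S → X, V : S → ℝ and s ∈ S, T_{g.M}[g.V](s) = T_M[V](g⁻¹ • s), where [g.V](s') = V(g⁻¹ • s'). -/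
/-- With a `G`-invariant transition kernel and an equivariant
map-conditioned reward, the Bellman optimality operator
`T_M[V](s) = ⨆ a, (R M a s + γ * ∑' s', P a s s' * V s')` is equivariant:
`T_{g.M}[g.V](s) = T_M[V](g⁻¹ • s)`. -/
theorem bellman_operator_equivariant
    {G S A X : Type*} [Group G] [MulAction G S] [MulAction G A]
    [Finite A] [Nonempty A]
    (P : A → S → S → ℝ)
    (hP : ∀ (g : G) (a : A) (s s' : S), P (g • a) (g • s) (g • s') = P a s s')
    (R : (S → X) → A → S → ℝ)
    (hR : ∀ (g : G) (M : S → X) (a : A) (s : S),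
      R (fun s => M (g⁻¹ • s)) (g • a) (g • s) = R M a s)
    (γ : ℝ)
    (g : G) (M : S → X) (V : S → ℝ) (s : S) :
    (⨆ a : A, (R (fun s => M (g⁻¹ • s)) a s
        + γ * ∑' s' : S, P a s s' * V (g⁻¹ • s')))
      = ⨆ a : A, (R M a (g⁻¹ • s) + γ * ∑' s' : S, P a (g⁻¹ • s) s' * V s') := by
  rw [← Equiv.iSup_comp (g := fun a : A => R (fun s => M (g⁻¹ • s)) a s
        + γ * ∑' s' : S, P a s s' * V (g⁻¹ • s')) (e := MulAction.toPerm g)]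
  refine iSup_congr fun a => ?_
  have hs : s = g • (g⁻¹ • s) := (smul_inv_smul g s).symm
  have hsum : (∑' s' : S, P (g • a) s s' * V (g⁻¹ • s'))
      = ∑' s' : S, P a (g⁻¹ • s) s' * V s' := by
    rw [← Equiv.tsum_eq (MulAction.toPerm g)]
    refine tsum_congr fun s' => ?_
    simp only [MulAction.toPerm_apply, inv_smul_smul]
    conv_lhs => rw [hs]
    rw [hP g a (g⁻¹ • s) s']
  simp only [MulAction.toPerm_apply, hsum]
  rw [← hR g M a (g⁻¹ • s), smul_inv_smul]
end
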